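/- Let h(x) = (x²−1)²/4 and let f be the clipped loss with parameters 1 < a < b. There exists a constant A ≥ 1 such that for all a ≥ A and b ≥ 2a: (1) f is continuously differentiable on ℝ with sup_{x∈ℝ} |f′(x)| ≤ 2a²b; (2) f′ is continuously differentiable with sup_{x∈ℝ} |f″(x)| ≤ 3a²; (3) f″ is differentiable at every point of ℝ∖{−b,−a,a,b} and |f‴(x)| ≤ 6a for all x ∈ ℝ∖{−b,−a,a,b}. -/

import Mathlib

set_option linter.unnecessarySeqFocus false

/-- The quartic loss `h(x) = (x² - 1)² / 4`. -/
noncomputable def hq (x : ℝ) : ℝ := (x ^ 2 - 1) ^ 2 / 4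

/-- The clipped loss `f` with parameters `a < b`: it agrees with `hq` on `[-a, a]`,
is a cubic spline on `a < |x| ≤ b` (built from `h'(a) = a³ - a` and `h''(a) = 3a² - 1`),
and is linear for `|x| > b`. -/
noncomputable def fclip (a b x : ℝ) : ℝ :=
  if |x| ≤ a then hq x
  else if |x| ≤ b then
    hq a + (a ^ 3 - a) * (|x| - a) + ((3 * a ^ 2 - 1) / 2) * (|x| - a) ^ 2
      - ((3 * a ^ 2 - 1) / (6 * (b - a))) * (|x| - a) ^ 3
  else
    (hq a + (a ^ 3 - a) * (b - a) + ((3 * a ^ 2 - 1) / 2) * (b - a) ^ 2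
      - ((3 * a ^ 2 - 1) / (6 * (b - a))) * (b - a) ^ 3)
      + ((a ^ 3 - a) + ((b - a) / 2) * (3 * a ^ 2 - 1)) * (|x| - b)

open Set

/-- The cubic spline piece. -/
noncomputable def Pc (a b x : ℝ) : ℝ :=
  hq a + (a ^ 3 - a) * (x - a) + ((3 * a ^ 2 - 1) / 2) * (x - a) ^ 2
    - ((3 * a ^ 2 - 1) / (6 * (b - a))) * (x - a) ^ 3

noncomputable def Pc' (a b x : ℝ) : ℝ :=
  (a ^ 3 - a) + (3 * a ^ 2 - 1) * (x - a) - ((3 * a ^ 2 - 1) / (2 * (b - a))) * (x - a) ^ 2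

noncomputable def Pc'' (a b x : ℝ) : ℝ :=
  (3 * a ^ 2 - 1) - ((3 * a ^ 2 - 1) / (b - a)) * (x - a)

noncomputable def s0 (a b : ℝ) : ℝ := (a ^ 3 - a) + ((b - a) / 2) * (3 * a ^ 2 - 1)

lemma hq_deriv (x : ℝ) : HasDerivAt hq (x ^ 3 - x) x := by
  have h1 := ((hasDerivAt_pow 2 x).sub_const 1)
  have h2 := (h1.pow 2).div_const 4
  refine h2.congr_deriv ?_
  push_cast; ring

lemma Pc_deriv {a b : ℝ} (hab : b - a ≠ 0) (x : ℝ) : HasDerivAt (Pc a b) (Pc' a b x) x := by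
  have hx : HasDerivAt (fun y : ℝ => y - a) 1 x := (hasDerivAt_id x).sub_const a
  have h := (((hx.const_mul (a ^ 3 - a)).const_add (hq a)).add
      ((hx.pow 2).const_mul ((3 * a ^ 2 - 1) / 2))).sub
      ((hx.pow 3).const_mul ((3 * a ^ 2 - 1) / (6 * (b - a))))
  refine h.congr_deriv ?_
  unfold Pc'
  push_cast
  field_simp
  ring

lemma Pc'_deriv {a b : ℝ} (hab : b - a ≠ 0) (x : ℝ) : HasDerivAt (Pc' a b) (Pc'' a b x) x := by
  have hx : HasDerivAt (fun y : ℝ => y - a) 1 x := (hasDerivAt_id x).sub_const a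
  have h := ((hx.const_mul (3 * a ^ 2 - 1)).const_add (a ^ 3 - a)).sub
      ((hx.pow 2).const_mul ((3 * a ^ 2 - 1) / (2 * (b - a))))
  refine h.congr_deriv ?_
  unfold Pc''
  push_cast
  field_simp

lemma Pc''_deriv (a b x : ℝ) : HasDerivAt (Pc'' a b) (-((3 * a ^ 2 - 1) / (b - a))) x := by
  have hx : HasDerivAt (fun y : ℝ => y - a) 1 x := (hasDerivAt_id x).sub_const a
  have h := (hx.const_mul ((3 * a ^ 2 - 1) / (b - a))).const_sub (3 * a ^ 2 - 1)
  refine h.congr_deriv ?_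
  ring

lemma lin_deriv (K s c x : ℝ) : HasDerivAt (fun y : ℝ => K + s * (y - c)) s x := by
  have h := (((hasDerivAt_id x).sub_const c).const_mul s).const_add K
  simpa using h

lemma HasDerivAt.comp_neg' {f : ℝ → ℝ} {d x : ℝ} (h : HasDerivAt f d (-x)) :
    HasDerivAt (fun y => f (-y)) (-d) x := by
  have := h.comp x (hasDerivAt_neg x)
  exact this.congr_deriv (by ring)

lemma cube_deriv (x : ℝ) : HasDerivAt (fun y : ℝ => y ^ 3 - y) (3 * x ^ 2 - 1) x := by
  have := (hasDerivAt_pow 3 x).sub (hasDerivAt_id x)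
  exact this.congr_deriv (by push_cast; ring)

lemma sq3_deriv (x : ℝ) : HasDerivAt (fun y : ℝ => 3 * y ^ 2 - 1) (6 * x) x := by
  have := ((hasDerivAt_pow 2 x).const_mul 3).sub_const 1
  exact this.congr_deriv (by push_cast; ring)

lemma glue {f gl gr : ℝ → ℝ} {c d u v : ℝ}
    (hgl : HasDerivAt gl d c) (hgr : HasDerivAt gr d c)
    (hu : u < c) (hl : ∀ y, u < y → y ≤ c → f y = gl y)
    (hv : c < v) (hr : ∀ y, c ≤ y → y < v → f y = gr y) :
    HasDerivAt f d c := by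
  have h1 : HasDerivWithinAt f d (Iic c) c := by
    refine (hgl.hasDerivWithinAt).congr_of_eventuallyEq ?_ (hl c hu le_rfl)
    filter_upwards [Ioc_mem_nhdsLE_of_mem (⟨hu, le_rfl⟩ : c ∈ Ioc u c)] with y hy
    exact hl y hy.1 hy.2
  have h2 : HasDerivWithinAt f d (Ici c) c := by
    refine (hgr.hasDerivWithinAt).congr_of_eventuallyEq ?_ (hr c le_rfl hv)
    filter_upwards [Ico_mem_nhdsGE_of_mem (⟨le_rfl, hv⟩ : c ∈ Ico c v)] with y hy
    exact hr y hy.1 hy.2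
  have h := h1.union h2
  rwa [Iic_union_Ici, hasDerivWithinAt_univ] at h

lemma loc {f g : ℝ → ℝ} {d x u v : ℝ} (hg : HasDerivAt g d x) (hu : u < x) (hv : x < v)
    (he : ∀ y, u < y → y < v → f y = g y) : HasDerivAt f d x := by
  refine hg.congr_of_eventuallyEq ?_
  filter_upwards [Ioo_mem_nhds hu hv] with y hy
  exact he y hy.1 hy.2

-- value-matching lemmas
lemma Pc'_at_a (a b : ℝ) : Pc' a b a = a ^ 3 - a := by unfold Pc'; ring

lemma Pc'_at_b {a b : ℝ} (h : b - a ≠ 0) : Pc' a b b = s0 a b := by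
  unfold Pc' s0; field_simp; ring

lemma Pc''_at_a (a b : ℝ) : Pc'' a b a = 3 * a ^ 2 - 1 := by unfold Pc''; ring

lemma Pc''_at_b {a b : ℝ} (h : b - a ≠ 0) : Pc'' a b b = 0 := by
  unfold Pc''; field_simp; ring

lemma Pc_at_a (a b : ℝ) : Pc a b a = hq a := by unfold Pc; ring
noncomputable def D1 (a b x : ℝ) : ℝ :=
  if x ≤ -b then -(s0 a b)
  else if x ≤ -a then -(Pc' a b (-x))
  else if x ≤ a then x ^ 3 - x
  else if x ≤ b then Pc' a b x
  else s0 a b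

noncomputable def D2 (a b x : ℝ) : ℝ :=
  if x ≤ -b then 0
  else if x ≤ -a then Pc'' a b (-x)
  else if x ≤ a then 3 * x ^ 2 - 1
  else if x ≤ b then Pc'' a b x
  else 0

noncomputable def D3 (a b x : ℝ) : ℝ :=
  if x ≤ -b then 0
  else if x ≤ -a then (3 * a ^ 2 - 1) / (b - a)
  else if x ≤ a then 6 * x
  else if x ≤ b then -((3 * a ^ 2 - 1) / (b - a))
  else 0

section Regions
variable {a b : ℝ} (ha : 1 ≤ a) (hab : 2 * a ≤ b)
include ha hab

lemma fclip_eq_inner {x : ℝ} (h : |x| ≤ a) : fclip a b x = hq x := by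
  rw [fclip, if_pos h]

lemma fclip_eq_mid {x : ℝ} (h1 : a ≤ x) (h2 : x ≤ b) : fclip a b x = Pc a b x := by
  have hx : |x| = x := abs_of_nonneg (by linarith)
  rcases eq_or_lt_of_le h1 with rfl | h1'
  · rw [fclip, if_pos (le_of_eq hx), Pc_at_a]
  · rw [fclip, if_neg (by rw [hx]; exact not_le.2 h1'), if_pos (by rw [hx]; exact h2), hx, Pc]

lemma fclip_eq_midm {x : ℝ} (h1 : -b ≤ x) (h2 : x ≤ -a) : fclip a b x = Pc a b (-x) := by
  have hx : |x| = -x := abs_of_nonpos (by linarith)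
  rcases eq_or_lt_of_le h2 with rfl | h2'
  · have hx2 : |(-a)| ≤ a := by rw [abs_neg, abs_of_nonneg (by linarith)]
    rw [fclip, if_pos hx2]
    simp only [hq, Pc, neg_neg]
    ring
  · rw [fclip, if_neg (by rw [hx]; push_neg; linarith), if_pos (by rw [hx]; linarith), hx, Pc]

lemma fclip_eq_out {x : ℝ} (h : b ≤ x) : fclip a b x = Pc a b b + s0 a b * (x - b) := by
  have hx : |x| = x := abs_of_nonneg (by linarith)
  rcases eq_or_lt_of_le h with rfl | h'
  · rw [fclip, if_neg (by rw [hx]; push_neg; linarith), if_pos (le_of_eq hx), hx]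
    simp [Pc]
  · rw [fclip, if_neg (by rw [hx]; push_neg; linarith), if_neg (by rw [hx]; exact not_le.2 h'),
      hx]
    rfl

lemma fclip_eq_outm {x : ℝ} (h : x ≤ -b) : fclip a b x = Pc a b b + s0 a b * (-x - b) := by
  have hx : |x| = -x := abs_of_nonpos (by linarith)
  rcases eq_or_lt_of_le h with rfl | h'
  · have hx2 : |(-b)| = b := by rw [abs_neg, abs_of_nonneg (by linarith)]
    rw [fclip, if_neg (by rw [hx2]; push_neg; linarith), if_pos (le_of_eq hx2), hx2]
    simp [Pc]
  · rw [fclip, if_neg (by rw [hx]; push_neg; linarith), if_neg (by rw [hx]; push_neg; linarith),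
      hx]
    rfl

end Regions
section Spec
variable {a b : ℝ} (ha : 1 ≤ a) (hab : 2 * a ≤ b)
include ha hab

lemma basic : (0:ℝ) < a ∧ a < b ∧ (0:ℝ) < b - a := by
  refine ⟨by linarith, by linarith, by linarith⟩

lemma D1_spec (x : ℝ) : HasDerivAt (fclip a b) (D1 a b x) x := by
  obtain ⟨ha0, hba, hv⟩ := basic ha hab
  have hv' : b - a ≠ 0 := ne_of_gt hv
  -- the five smooth pieces
  have linp : ∀ z, HasDerivAt (fun y : ℝ => Pc a b b + s0 a b * (y - b)) (s0 a b) z :=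
    fun z => lin_deriv _ _ _ z
  have linm : ∀ z : ℝ, HasDerivAt (fun y : ℝ => Pc a b b + s0 a b * (-y - b)) (-(s0 a b)) z := by
    intro z
    exact (lin_deriv (Pc a b b) (s0 a b) b (-z)).comp_neg'
  have midm : ∀ z : ℝ, HasDerivAt (fun y : ℝ => Pc a b (-y)) (-(Pc' a b (-z))) z :=
    fun z => (Pc_deriv hv' (-z)).comp_neg'
  rcases lt_trichotomy x (-b) with h | h | h
  · rw [show D1 a b x = -(s0 a b) from if_pos h.le]
    exact loc (linm x) (sub_one_lt x) h fun y _ hy => fclip_eq_outm ha hab hy.le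
  · subst h
    rw [show D1 a b (-b) = -(s0 a b) from if_pos le_rfl]
    refine glue (linm (-b)) ?_ (sub_one_lt (-b))
      (fun y _ hy => fclip_eq_outm ha hab hy) (by linarith : -b < -a)
      (fun y hy hy' => fclip_eq_midm ha hab hy hy'.le)
    have := midm (-b)
    rwa [neg_neg, Pc'_at_b hv'] at this
  rcases lt_trichotomy x (-a) with h2 | h2 | h2
  · rw [show D1 a b x = -(Pc' a b (-x)) from by
      rw [D1, if_neg (not_le.2 h), if_pos h2.le]]
    exact loc (midm x) h h2 fun y hy hy' => fclip_eq_midm ha hab hy.le hy'.le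
  · rw [h2] at h ⊢
    rw [show D1 a b (-a) = -(Pc' a b a) from by
      rw [D1, if_neg (not_le.2 h), if_pos le_rfl, neg_neg]]
    refine glue (by simpa using midm (-a)) ?_ h
      (fun y hy hy' => fclip_eq_midm ha hab hy.le hy') (by linarith : -a < a)
      (fun y hy hy' => fclip_eq_inner ha hab (abs_le.2 ⟨hy, hy'.le⟩))
    have := hq_deriv (-a)
    rw [show (-a) ^ 3 - (-a) = -(Pc' a b a) from by rw [Pc'_at_a]; ring] at this
    exact this
  rcases lt_trichotomy x a with h3 | h3 | h3
  · rw [show D1 a b x = x ^ 3 - x from by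
      rw [D1, if_neg (not_le.2 h), if_neg (not_le.2 h2), if_pos h3.le]]
    exact loc (hq_deriv x) h2 h3 fun y hy hy' =>
      fclip_eq_inner ha hab (abs_le.2 ⟨hy.le, hy'.le⟩)
  · rw [h3] at h h2 ⊢
    rw [show D1 a b a = a ^ 3 - a from by
      rw [D1, if_neg (not_le.2 h), if_neg (not_le.2 h2), if_pos le_rfl]]
    refine glue (hq_deriv a) ?_ h2
      (fun y hy hy' => fclip_eq_inner ha hab (abs_le.2 ⟨hy.le, hy'⟩)) hba
      (fun y hy hy' => fclip_eq_mid ha hab hy hy'.le)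
    have := Pc_deriv hv' a
    rwa [Pc'_at_a] at this
  rcases lt_trichotomy x b with h4 | h4 | h4
  · rw [show D1 a b x = Pc' a b x from by
      rw [D1, if_neg (not_le.2 h), if_neg (not_le.2 h2), if_neg (not_le.2 h3), if_pos h4.le]]
    exact loc (Pc_deriv hv' x) h3 h4 fun y hy hy' => fclip_eq_mid ha hab hy.le hy'.le
  · rw [h4] at h h2 h3 ⊢
    rw [show D1 a b b = s0 a b from by
      rw [D1, if_neg (not_le.2 h), if_neg (not_le.2 h2), if_neg (not_le.2 h3), if_pos le_rfl,
        Pc'_at_b hv']]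
    refine glue ?_ ?_ h3 (fun y hy hy' => fclip_eq_mid ha hab hy.le hy')
      (lt_add_one b) (fun y hy _ => fclip_eq_out ha hab hy)
    · have := Pc_deriv hv' b
      rwa [Pc'_at_b hv'] at this
    · exact linp b
  · rw [show D1 a b x = s0 a b from by
      rw [D1, if_neg (not_le.2 h), if_neg (not_le.2 h2), if_neg (not_le.2 h3),
        if_neg (not_le.2 h4)]]
    exact loc (linp x) h4 (lt_add_one x) fun y hy _ => fclip_eq_out ha hab hy.le

end Spec
section Spec2
variable {a b : ℝ} (ha : 1 ≤ a) (hab : 2 * a ≤ b)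
include ha hab

-- region identities for D1
lemma D1_eq_outm {x : ℝ} (h : x ≤ -b) : D1 a b x = -(s0 a b) := if_pos h

lemma D1_eq_midm {x : ℝ} (h1 : -b ≤ x) (h2 : x ≤ -a) : D1 a b x = -(Pc' a b (-x)) := by
  obtain ⟨ha0, hba, hv⟩ := basic ha hab
  by_cases h : x ≤ -b
  · have hx : x = -b := le_antisymm h h1
    rw [D1, if_pos h, hx, neg_neg, Pc'_at_b (ne_of_gt hv)]
  · rw [D1, if_neg h, if_pos h2]

lemma D1_eq_inner {x : ℝ} (h1 : -a ≤ x) (h2 : x ≤ a) : D1 a b x = x ^ 3 - x := by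
  obtain ⟨ha0, hba, hv⟩ := basic ha hab
  have hnb : ¬ x ≤ -b := by push_neg; linarith
  by_cases h : x ≤ -a
  · have hx : x = -a := le_antisymm h h1
    rw [D1, if_neg hnb, if_pos h, hx, neg_neg, Pc'_at_a]
    ring
  · rw [D1, if_neg hnb, if_neg h, if_pos h2]

lemma D1_eq_mid {x : ℝ} (h1 : a ≤ x) (h2 : x ≤ b) : D1 a b x = Pc' a b x := by
  obtain ⟨ha0, hba, hv⟩ := basic ha hab
  have hnb : ¬ x ≤ -b := by push_neg; linarith
  have hna : ¬ x ≤ -a := by push_neg; linarith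
  by_cases h : x ≤ a
  · have hx : x = a := le_antisymm h h1
    rw [D1, if_neg hnb, if_neg hna, if_pos h, hx, Pc'_at_a]
  · rw [D1, if_neg hnb, if_neg hna, if_neg h, if_pos h2]

lemma D1_eq_out {x : ℝ} (h1 : b ≤ x) : D1 a b x = s0 a b := by
  obtain ⟨ha0, hba, hv⟩ := basic ha hab
  have hnb : ¬ x ≤ -b := by push_neg; linarith
  have hna : ¬ x ≤ -a := by push_neg; linarith
  have hia : ¬ x ≤ a := by push_neg; linarith
  by_cases h : x ≤ b
  · have hx : x = b := le_antisymm h h1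
    rw [D1, if_neg hnb, if_neg hna, if_neg hia, if_pos h, hx, Pc'_at_b (ne_of_gt hv)]
  · rw [D1, if_neg hnb, if_neg hna, if_neg hia, if_neg h]

lemma D2_spec (x : ℝ) : HasDerivAt (D1 a b) (D2 a b x) x := by
  obtain ⟨ha0, hba, hv⟩ := basic ha hab
  have hv' : b - a ≠ 0 := ne_of_gt hv
  have midm : ∀ z : ℝ, HasDerivAt (fun y : ℝ => -(Pc' a b (-y))) (Pc'' a b (-z)) z := by
    intro z
    have := ((Pc'_deriv hv' (-z)).comp_neg').neg
    exact this.congr_deriv (neg_neg _)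
  rcases lt_trichotomy x (-b) with h | h | h
  · rw [show D2 a b x = 0 from if_pos h.le]
    exact loc (hasDerivAt_const x (-(s0 a b))) (sub_one_lt x) h
      (fun y _ hy => D1_eq_outm ha hab hy.le)
  · subst h
    rw [show D2 a b (-b) = 0 from if_pos le_rfl]
    refine glue (hasDerivAt_const (-b) (-(s0 a b))) ?_ (sub_one_lt (-b))
      (fun y _ hy => D1_eq_outm ha hab hy) (by linarith : -b < -a)
      (fun y hy hy' => D1_eq_midm ha hab hy hy'.le)
    have := midm (-b)
    rwa [neg_neg, Pc''_at_b hv'] at this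
  rcases lt_trichotomy x (-a) with h2 | h2 | h2
  · rw [show D2 a b x = Pc'' a b (-x) from by
      rw [D2, if_neg (not_le.2 h), if_pos h2.le]]
    exact loc (midm x) h h2 fun y hy hy' => D1_eq_midm ha hab hy.le hy'.le
  · rw [h2] at h ⊢
    rw [show D2 a b (-a) = Pc'' a b a from by
      rw [D2, if_neg (not_le.2 h), if_pos le_rfl, neg_neg]]
    refine glue (by simpa using midm (-a)) ?_ h
      (fun y hy hy' => D1_eq_midm ha hab hy.le hy') (by linarith : -a < a)
      (fun y hy hy' => D1_eq_inner ha hab hy hy'.le)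
    have := cube_deriv (-a)
    rw [show 3 * (-a) ^ 2 - 1 = Pc'' a b a from by rw [Pc''_at_a]; ring] at this
    exact this
  rcases lt_trichotomy x a with h3 | h3 | h3
  · rw [show D2 a b x = 3 * x ^ 2 - 1 from by
      rw [D2, if_neg (not_le.2 h), if_neg (not_le.2 h2), if_pos h3.le]]
    exact loc (cube_deriv x) h2 h3 fun y hy hy' => D1_eq_inner ha hab hy.le hy'.le
  · rw [h3] at h h2 ⊢
    rw [show D2 a b a = 3 * a ^ 2 - 1 from by
      rw [D2, if_neg (not_le.2 h), if_neg (not_le.2 h2), if_pos le_rfl]]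
    refine glue (cube_deriv a) ?_ h2
      (fun y hy hy' => D1_eq_inner ha hab hy.le hy') hba
      (fun y hy hy' => D1_eq_mid ha hab hy hy'.le)
    have := Pc'_deriv hv' a
    rwa [Pc''_at_a] at this
  rcases lt_trichotomy x b with h4 | h4 | h4
  · rw [show D2 a b x = Pc'' a b x from by
      rw [D2, if_neg (not_le.2 h), if_neg (not_le.2 h2), if_neg (not_le.2 h3), if_pos h4.le]]
    exact loc (Pc'_deriv hv' x) h3 h4 fun y hy hy' => D1_eq_mid ha hab hy.le hy'.le
  · rw [h4] at h h2 h3 ⊢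
    rw [show D2 a b b = 0 from by
      rw [D2, if_neg (not_le.2 h), if_neg (not_le.2 h2), if_neg (not_le.2 h3), if_pos le_rfl,
        Pc''_at_b hv']]
    refine glue ?_ (hasDerivAt_const b (s0 a b)) h3
      (fun y hy hy' => D1_eq_mid ha hab hy.le hy') (lt_add_one b)
      (fun y hy _ => D1_eq_out ha hab hy)
    have := Pc'_deriv hv' b
    rwa [Pc''_at_b hv'] at this
  · rw [show D2 a b x = 0 from by
      rw [D2, if_neg (not_le.2 h), if_neg (not_le.2 h2), if_neg (not_le.2 h3),
        if_neg (not_le.2 h4)]]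
    exact loc (hasDerivAt_const x (s0 a b)) h4 (lt_add_one x) fun y hy _ =>
      D1_eq_out ha hab hy.le

end Spec2
section Spec3
variable {a b : ℝ} (ha : 1 ≤ a) (hab : 2 * a ≤ b)
include ha hab

lemma D2_eq_outm {x : ℝ} (h : x ≤ -b) : D2 a b x = 0 := if_pos h

lemma D2_eq_midm {x : ℝ} (h1 : -b ≤ x) (h2 : x ≤ -a) : D2 a b x = Pc'' a b (-x) := by
  obtain ⟨ha0, hba, hv⟩ := basic ha hab
  by_cases h : x ≤ -b
  · have hx : x = -b := le_antisymm h h1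
    rw [D2, if_pos h, hx, neg_neg, Pc''_at_b (ne_of_gt hv)]
  · rw [D2, if_neg h, if_pos h2]

lemma D2_eq_inner {x : ℝ} (h1 : -a ≤ x) (h2 : x ≤ a) : D2 a b x = 3 * x ^ 2 - 1 := by
  obtain ⟨ha0, hba, hv⟩ := basic ha hab
  have hnb : ¬ x ≤ -b := by push_neg; linarith
  by_cases h : x ≤ -a
  · have hx : x = -a := le_antisymm h h1
    rw [D2, if_neg hnb, if_pos h, hx, neg_neg, Pc''_at_a]
    ring
  · rw [D2, if_neg hnb, if_neg h, if_pos h2]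

lemma D2_eq_mid {x : ℝ} (h1 : a ≤ x) (h2 : x ≤ b) : D2 a b x = Pc'' a b x := by
  obtain ⟨ha0, hba, hv⟩ := basic ha hab
  have hnb : ¬ x ≤ -b := by push_neg; linarith
  have hna : ¬ x ≤ -a := by push_neg; linarith
  by_cases h : x ≤ a
  · have hx : x = a := le_antisymm h h1
    rw [D2, if_neg hnb, if_neg hna, if_pos h, hx, Pc''_at_a]
  · rw [D2, if_neg hnb, if_neg hna, if_neg h, if_pos h2]

lemma D2_eq_out {x : ℝ} (h1 : b ≤ x) : D2 a b x = 0 := by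
  obtain ⟨ha0, hba, hv⟩ := basic ha hab
  have hnb : ¬ x ≤ -b := by push_neg; linarith
  have hna : ¬ x ≤ -a := by push_neg; linarith
  have hia : ¬ x ≤ a := by push_neg; linarith
  by_cases h : x ≤ b
  · have hx : x = b := le_antisymm h h1
    rw [D2, if_neg hnb, if_neg hna, if_neg hia, if_pos h, hx, Pc''_at_b (ne_of_gt hv)]
  · rw [D2, if_neg hnb, if_neg hna, if_neg hia, if_neg h]

lemma D3_spec {x : ℝ} (hx : x ∉ ({-b, -a, a, b} : Set ℝ)) :
    HasDerivAt (D2 a b) (D3 a b x) x := by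
  obtain ⟨ha0, hba, hv⟩ := basic ha hab
  have hv' : b - a ≠ 0 := ne_of_gt hv
  simp only [Set.mem_insert_iff, Set.mem_singleton_iff, not_or] at hx
  obtain ⟨e1, e2, e3, e4⟩ := hx
  have midm : ∀ z : ℝ, HasDerivAt (fun y : ℝ => Pc'' a b (-y)) ((3 * a ^ 2 - 1) / (b - a)) z := by
    intro z
    have := (Pc''_deriv a b (-z)).comp_neg'
    simpa using this
  rcases lt_trichotomy x (-b) with h | h | h
  · rw [show D3 a b x = 0 from if_pos h.le]
    exact loc (hasDerivAt_const x (0:ℝ)) (sub_one_lt x) h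
      (fun y _ hy => D2_eq_outm ha hab hy.le)
  · exact absurd h e1
  rcases lt_trichotomy x (-a) with h2 | h2 | h2
  · rw [show D3 a b x = (3 * a ^ 2 - 1) / (b - a) from by
      rw [D3, if_neg (not_le.2 h), if_pos h2.le]]
    exact loc (midm x) h h2 fun y hy hy' => D2_eq_midm ha hab hy.le hy'.le
  · exact absurd h2 e2
  rcases lt_trichotomy x a with h3 | h3 | h3
  · rw [show D3 a b x = 6 * x from by
      rw [D3, if_neg (not_le.2 h), if_neg (not_le.2 h2), if_pos h3.le]]
    exact loc (sq3_deriv x) h2 h3 fun y hy hy' => D2_eq_inner ha hab hy.le hy'.le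
  · exact absurd h3 e3
  rcases lt_trichotomy x b with h4 | h4 | h4
  · rw [show D3 a b x = -((3 * a ^ 2 - 1) / (b - a)) from by
      rw [D3, if_neg (not_le.2 h), if_neg (not_le.2 h2), if_neg (not_le.2 h3), if_pos h4.le]]
    exact loc (Pc''_deriv a b x) h3 h4 fun y hy hy' => D2_eq_mid ha hab hy.le hy'.le
  · exact absurd h4 e4
  · rw [show D3 a b x = 0 from by
      rw [D3, if_neg (not_le.2 h), if_neg (not_le.2 h2), if_neg (not_le.2 h3),
        if_neg (not_le.2 h4)]]
    exact loc (hasDerivAt_const x (0:ℝ)) h4 (lt_add_one x) fun y hy _ =>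
      D2_eq_out ha hab hy.le

lemma D2_cont : Continuous (D2 a b) := by
  obtain ⟨ha0, hba, hv⟩ := basic ha hab
  have hv' : b - a ≠ 0 := ne_of_gt hv
  have cP : Continuous (Pc'' a b) := by unfold Pc''; fun_prop
  have c4 : Continuous (fun x : ℝ => if x ≤ b then Pc'' a b x else 0) := by
    refine Continuous.if_le cP continuous_const continuous_id continuous_const ?_
    intro x hx
    rw [hx, Pc''_at_b hv']
  have c3 : Continuous (fun x : ℝ =>
      if x ≤ a then 3 * x ^ 2 - 1 else if x ≤ b then Pc'' a b x else 0) := by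
    refine Continuous.if_le (by fun_prop) c4 continuous_id continuous_const ?_
    intro x hx
    rw [hx, if_pos hba.le, Pc''_at_a]
  have c2 : Continuous (fun x : ℝ => if x ≤ -a then Pc'' a b (-x)
      else if x ≤ a then 3 * x ^ 2 - 1 else if x ≤ b then Pc'' a b x else 0) := by
    refine Continuous.if_le (by fun_prop) c3 continuous_id continuous_const ?_
    intro x hx
    rw [hx, if_pos (by linarith : -a ≤ a), neg_neg, Pc''_at_a]
    ring
  have c1 : Continuous (fun x : ℝ => D2 a b x) := by
    unfold D2
    refine Continuous.if_le continuous_const c2 continuous_id continuous_const ?_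
    intro x hx
    rw [hx, if_pos (by linarith : -b ≤ -a), neg_neg, Pc''_at_b hv']
  exact c1

end Spec3
section Bounds
variable {a b : ℝ} (ha : 1 ≤ a) (hab : 2 * a ≤ b)
include ha hab

lemma s0_bounds : 0 ≤ s0 a b ∧ s0 a b ≤ 2 * a ^ 2 * b := by
  obtain ⟨ha0, hba, hv⟩ := basic ha hab
  unfold s0
  constructor
  · nlinarith [mul_nonneg hv.le (by nlinarith : (0:ℝ) ≤ 3 * a ^ 2 - 1),
      (by nlinarith [mul_nonneg (mul_nonneg ha0.le (by linarith : (0:ℝ) ≤ a - 1)) (by linarith : (0:ℝ) ≤ a + 1)] : (0:ℝ) ≤ a ^ 3 - a)]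
  · nlinarith [mul_nonneg (mul_nonneg ha0.le ha0.le) (by linarith : (0:ℝ) ≤ b)]

lemma Pc'_bounds {y : ℝ} (h1 : a ≤ y) (h2 : y ≤ b) :
    0 ≤ Pc' a b y ∧ Pc' a b y ≤ s0 a b := by
  obtain ⟨ha0, hba, hv⟩ := basic ha hab
  have hc2 : (0:ℝ) ≤ 3 * a ^ 2 - 1 := by nlinarith
  have hw : (3 * a ^ 2 - 1) / (2 * (b - a)) * (2 * (b - a)) = 3 * a ^ 2 - 1 :=
    div_mul_cancel₀ _ (by positivity)
  set w := (3 * a ^ 2 - 1) / (2 * (b - a)) with hwdef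
  have hw0 : 0 ≤ w := div_nonneg hc2 (by linarith)
  have hc1 : 0 ≤ a ^ 3 - a := by nlinarith [mul_nonneg (mul_nonneg ha0.le (by linarith : (0:ℝ) ≤ a - 1)) (by linarith : (0:ℝ) ≤ a + 1)]
  have e1 : (3 * a ^ 2 - 1) * (y - a) = 2 * w * (b - a) * (y - a) := by rw [← hw]; ring
  unfold Pc'
  rw [← hwdef]
  constructor
  · nlinarith [mul_nonneg (mul_nonneg hw0 (by linarith : (0:ℝ) ≤ y - a))
      (by linarith : (0:ℝ) ≤ 2 * (b - a) - (y - a)), e1, hc1]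
  · unfold s0
    have e2 : (b - a) / 2 * (3 * a ^ 2 - 1) = w * (b - a) ^ 2 := by rw [← hw]; ring
    nlinarith [mul_nonneg hw0 (sq_nonneg (b - y)), e1, e2]

lemma Pc''_bounds {y : ℝ} (h1 : a ≤ y) (h2 : y ≤ b) :
    0 ≤ Pc'' a b y ∧ Pc'' a b y ≤ 3 * a ^ 2 - 1 := by
  obtain ⟨ha0, hba, hv⟩ := basic ha hab
  have hc2 : (0:ℝ) ≤ 3 * a ^ 2 - 1 := by nlinarith
  have hw : (3 * a ^ 2 - 1) / (b - a) * (b - a) = 3 * a ^ 2 - 1 :=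
    div_mul_cancel₀ _ (ne_of_gt hv)
  set w := (3 * a ^ 2 - 1) / (b - a) with hwdef
  have hw0 : 0 ≤ w := div_nonneg hc2 hv.le
  unfold Pc''
  rw [← hwdef]
  constructor
  · nlinarith [mul_nonneg hw0 (by linarith : (0:ℝ) ≤ b - y), hw]
  · nlinarith [mul_nonneg hw0 (by linarith : (0:ℝ) ≤ y - a)]

lemma D1_bound (x : ℝ) : |D1 a b x| ≤ 2 * a ^ 2 * b := by
  obtain ⟨ha0, hba, hv⟩ := basic ha hab
  obtain ⟨hs0, hs1⟩ := s0_bounds ha hab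
  rw [D1]
  split_ifs with h1 h2 h3 h4
  · rw [abs_neg, abs_of_nonneg hs0]; exact hs1
  · push_neg at h1
    obtain ⟨hp0, hp1⟩ := Pc'_bounds ha hab (by linarith : a ≤ -x) (by linarith : -x ≤ b)
    rw [abs_neg, abs_of_nonneg hp0]; linarith
  · push_neg at h1 h2
    have hx3 : x ^ 3 ≤ a ^ 3 := by nlinarith [sq_nonneg (a + x), sq_nonneg (a - x)]
    have hx3' : -(a ^ 3) ≤ x ^ 3 := by nlinarith [sq_nonneg (a + x), sq_nonneg (a - x)]
    rw [abs_le]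
    constructor <;> nlinarith [mul_nonneg (mul_nonneg ha0.le ha0.le) (by linarith : (0:ℝ) ≤ b)]
  · push_neg at h3
    obtain ⟨hp0, hp1⟩ := Pc'_bounds ha hab h3.le h4
    rw [abs_of_nonneg hp0]; linarith
  · rw [abs_of_nonneg hs0]; exact hs1

lemma D2_bound (x : ℝ) : |D2 a b x| ≤ 3 * a ^ 2 := by
  obtain ⟨ha0, hba, hv⟩ := basic ha hab
  have hc2 : (0:ℝ) ≤ 3 * a ^ 2 - 1 := by nlinarith
  rw [D2]
  split_ifs with h1 h2 h3 h4
  · simp; positivity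
  · push_neg at h1
    obtain ⟨hp0, hp1⟩ := Pc''_bounds ha hab (by linarith : a ≤ -x) (by linarith : -x ≤ b)
    rw [abs_of_nonneg hp0]; linarith
  · push_neg at h1 h2
    rw [abs_le]
    constructor <;> nlinarith
  · push_neg at h3
    obtain ⟨hp0, hp1⟩ := Pc''_bounds ha hab h3.le h4
    rw [abs_of_nonneg hp0]; linarith
  · simp; positivity

lemma D3_bound (x : ℝ) : |D3 a b x| ≤ 6 * a := by
  obtain ⟨ha0, hba, hv⟩ := basic ha hab
  have hc2 : (0:ℝ) ≤ 3 * a ^ 2 - 1 := by nlinarith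
  have hq0 : 0 ≤ (3 * a ^ 2 - 1) / (b - a) := div_nonneg hc2 hv.le
  have hq1 : (3 * a ^ 2 - 1) / (b - a) ≤ 6 * a := by
    rw [div_le_iff₀ hv]
    nlinarith
  rw [D3]
  split_ifs with h1 h2 h3 h4
  · simp; positivity
  · rw [abs_of_nonneg hq0]; exact hq1
  · push_neg at h1 h2
    rw [abs_le]
    constructor <;> nlinarith
  · rw [abs_neg, abs_of_nonneg hq0]; exact hq1
  · simp; positivity

end Bounds
/-- there is a constant `A ≥ 1` such that for all `a ≥ A` and `b ≥ 2a`: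
(1) `f` is continuously differentiable with `|f'| ≤ 2a²b` everywhere;
(2) `f'` is continuously differentiable with `|f''| ≤ 3a²` everywhere;
(3) `f''` is differentiable away from `{-b, -a, a, b}` and `|f'''| ≤ 6a` there. -/
theorem clipped_loss_derivative_bounds :
    ∃ A : ℝ, 1 ≤ A ∧ ∀ a b : ℝ, A ≤ a → 2 * a ≤ b →
      (ContDiff ℝ 1 (fclip a b) ∧ ∀ x : ℝ, |deriv (fclip a b) x| ≤ 2 * a ^ 2 * b) ∧
      (ContDiff ℝ 1 (deriv (fclip a b)) ∧
        ∀ x : ℝ, |deriv (deriv (fclip a b)) x| ≤ 3 * a ^ 2) ∧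
      (∀ x : ℝ, x ∉ ({-b, -a, a, b} : Set ℝ) →
        DifferentiableAt ℝ (deriv (deriv (fclip a b))) x ∧
          |deriv (deriv (deriv (fclip a b))) x| ≤ 6 * a) := by
  refine ⟨1, le_rfl, fun a b ha hab => ?_⟩
  have H1 : ∀ x, HasDerivAt (fclip a b) (D1 a b x) x := D1_spec ha hab
  have H2 : ∀ x, HasDerivAt (D1 a b) (D2 a b x) x := D2_spec ha hab
  have hd1 : deriv (fclip a b) = D1 a b := funext fun x => (H1 x).deriv
  have hd2 : deriv (D1 a b) = D2 a b := funext fun x => (H2 x).deriv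
  have hdiff1 : Differentiable ℝ (D1 a b) := fun x => (H2 x).differentiableAt
  refine ⟨⟨?_, ?_⟩, ⟨?_, ?_⟩, ?_⟩
  · rw [contDiff_one_iff_deriv]
    exact ⟨fun x => (H1 x).differentiableAt, by rw [hd1]; exact hdiff1.continuous⟩
  · intro x
    rw [hd1]
    exact D1_bound ha hab x
  · rw [hd1, contDiff_one_iff_deriv]
    exact ⟨hdiff1, by rw [hd2]; exact D2_cont ha hab⟩
  · intro x
    rw [hd1, hd2]
    exact D2_bound ha hab x
  · intro x hx
    have H3 := D3_spec ha hab hx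
    refine ⟨?_, ?_⟩
    · rw [hd1, hd2]
      exact H3.differentiableAt
    · rw [hd1, hd2, H3.deriv]
      exact D3_bound ha hab x
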